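/- For all natural numbers e₁, e₂, the following identity holds in ℚ(q): q^{e₁·e₂}·A(e₁)·A(e₂) = Σ_{c=0}^{min(e₁, e₂)} q^{−(e₁−c)·c − (e₁−c)·(e₂−c) − c·(e₂−c)}·A(e₁−c)·A(c)·A(e₂−c), where A(d) := q^d·(∏_{i=1}^{d}(q^{2i} − 1))^{−1}. (This is the coefficientwise form of the quantum dilogarithm identity A^{(0)}(t₂)∗A^{(0)}(t₁) = A^{(0)}(t₁)∗A^{(0)}(t₁t₂)∗A^{(0)}(t₂) in the quantum torus of the A₂ quiver, i.e. the wall-crossing identity for the quiver • → •.) -/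

import Mathlib

/-- The `d`-th coefficient `A(d) = q^d / ∏_{i=1}^{d}(q^{2i} − 1)` of the quantum
dilogarithm series `A^{(0)}(t)`, as an element of `ℚ(q)`. -/
noncomputable def Aq (d : ℕ) : RatFunc ℚ :=
  RatFunc.X ^ d * (∏ i ∈ Finset.Icc 1 d, (RatFunc.X ^ (2 * i) - 1))⁻¹

open Finset

noncomputable def Pq (d : ℕ) : RatFunc ℚ :=
  ∏ i ∈ Finset.Icc 1 d, (RatFunc.X ^ (2 * i) - 1)

lemma factor_ne_zero (i : ℕ) : (RatFunc.X : RatFunc ℚ) ^ (2 * (i+1)) - 1 ≠ 0 := by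
  have inj := IsFractionRing.injective (Polynomial ℚ) (RatFunc ℚ)
  intro h
  rw [sub_eq_zero] at h
  have h2 : (Polynomial.X : Polynomial ℚ) ^ (2*(i+1)) = 1 := by
    apply inj; simpa [map_pow, RatFunc.algebraMap_X] using h
  have := congrArg Polynomial.natDegree h2
  simp [Polynomial.natDegree_X_pow] at this

lemma Pq_ne_zero (d : ℕ) : Pq d ≠ 0 := by
  rw [Pq, Finset.prod_ne_zero_iff]
  intro i hi
  simp only [Finset.mem_Icc] at hi
  obtain ⟨j, rfl⟩ : ∃ j, i = j + 1 := ⟨i - 1, by omega⟩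
  exact factor_ne_zero j

lemma Pq_succ (d : ℕ) : Pq (d+1) = Pq d * (RatFunc.X ^ (2 * (d+1)) - 1) :=
  Finset.prod_Icc_succ_top (by omega) _

lemma inv_Pq_succ (d : ℕ) :
    ((RatFunc.X : RatFunc ℚ) ^ (2 * (d+1)) - 1) * (Pq (d+1))⁻¹ = (Pq d)⁻¹ := by
  rw [Pq_succ, mul_inv, ← mul_assoc, mul_comm ((RatFunc.X : RatFunc ℚ) ^ (2*(d+1)) - 1),
    mul_assoc, mul_inv_cancel₀ (factor_ne_zero d), mul_one]

lemma natE1 (c : ℕ) : c*(c-1) + 2*c = c*(c+1) := by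
  cases c with
  | zero => rfl
  | succ m => simp only [Nat.add_sub_cancel]; ring

lemma natE2 (k e₂ : ℕ) (h : k + 1 ≤ e₂) : 2*e₂ + k*(k-1) = (k+1)*k + 2*(e₂-k) := by
  obtain ⟨d, rfl⟩ := Nat.exists_eq_add_of_le h
  rw [show k+1+d-k = d+1 from by omega]
  cases k with
  | zero => omega
  | succ m => simp only [Nat.add_sub_cancel]; ring

lemma natE3 (e₂ : ℕ) : 2*e₂ + e₂*(e₂-1) = e₂*(e₂+1) := by
  cases e₂ with
  | zero => rfl
  | succ m => simp only [Nat.add_sub_cancel]; ring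

lemma core (e₂ e₁ : ℕ) :
    ∑ c ∈ range (min e₁ e₂ + 1),
      (RatFunc.X : RatFunc ℚ) ^ (c * (c-1)) *
        ((Pq c)⁻¹ * (Pq (e₁ - c))⁻¹ * (Pq (e₂ - c))⁻¹)
    = RatFunc.X ^ (2 * (e₁ * e₂)) * ((Pq e₁)⁻¹ * (Pq e₂)⁻¹) := by
  induction e₁ with
  | zero => simp [Pq]
  | succ n ih =>
    apply mul_left_cancel₀ (factor_ne_zero n)
    have hR : ((RatFunc.X : RatFunc ℚ)^(2*(n+1)) - 1) *
        (RatFunc.X^(2*((n+1)*e₂)) * ((Pq (n+1))⁻¹ * (Pq e₂)⁻¹))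
        = RatFunc.X^(2*e₂) * (RatFunc.X^(2*(n*e₂)) * ((Pq n)⁻¹ * (Pq e₂)⁻¹)) := by
      rw [← inv_Pq_succ n, show 2*((n+1)*e₂) = 2*e₂ + 2*(n*e₂) from by ring, pow_add]
      ring
    rw [hR, ← ih, Finset.mul_sum]
    have split : ∀ c ∈ range (min (n+1) e₂ + 1),
        ((RatFunc.X : RatFunc ℚ)^(2*(n+1)) - 1) *
          (RatFunc.X^(c*(c-1)) * ((Pq c)⁻¹ * (Pq (n+1-c))⁻¹ * (Pq (e₂-c))⁻¹))
        = (RatFunc.X^(c*(c-1)) * RatFunc.X^(2*c) * (RatFunc.X^(2*(n+1-c)) - 1) *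
            ((Pq c)⁻¹ * (Pq (n+1-c))⁻¹ * (Pq (e₂-c))⁻¹))
        + (RatFunc.X^(c*(c-1)) * (RatFunc.X^(2*c) - 1) *
            ((Pq c)⁻¹ * (Pq (n+1-c))⁻¹ * (Pq (e₂-c))⁻¹)) := by
      intro c hc
      simp only [mem_range] at hc
      have hcn : c ≤ n+1 := le_trans (by omega : c ≤ min (n+1) e₂) (min_le_left _ _)
      have key : (RatFunc.X : RatFunc ℚ)^(2*(n+1)) = RatFunc.X^(2*c) * RatFunc.X^(2*(n+1-c)) := by
        rw [← pow_add]; congr 1; omega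
      rw [key]; ring
    rw [Finset.sum_congr rfl split, Finset.sum_add_distrib]
    have Aterm : ∀ c, c ≤ n →
        (RatFunc.X : RatFunc ℚ)^(c*(c-1)) * RatFunc.X^(2*c) * (RatFunc.X^(2*(n+1-c)) - 1) *
          ((Pq c)⁻¹ * (Pq (n+1-c))⁻¹ * (Pq (e₂-c))⁻¹)
        = RatFunc.X^(c*(c+1)) * ((Pq c)⁻¹ * (Pq (n-c))⁻¹ * (Pq (e₂-c))⁻¹) := by
      intro c hc
      rw [← pow_add, natE1 c, show n+1-c = (n-c)+1 from by omega, ← inv_Pq_succ (n-c)]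
      ring
    have hA : ∑ c ∈ range (min (n+1) e₂ + 1),
        (RatFunc.X : RatFunc ℚ)^(c*(c-1)) * RatFunc.X^(2*c) * (RatFunc.X^(2*(n+1-c)) - 1) *
          ((Pq c)⁻¹ * (Pq (n+1-c))⁻¹ * (Pq (e₂-c))⁻¹)
        = ∑ c ∈ range (min n e₂ + 1),
            RatFunc.X^(c*(c+1)) * ((Pq c)⁻¹ * (Pq (n-c))⁻¹ * (Pq (e₂-c))⁻¹) := by
      rcases le_or_gt e₂ n with h | h
      · rw [min_eq_right (by omega), min_eq_right h]
        exact Finset.sum_congr rfl (fun c hc => Aterm c (by simp only [mem_range] at hc; omega))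
      · rw [min_eq_left (by omega), min_eq_left (by omega), Finset.sum_range_succ,
          Nat.sub_self]
        norm_num
        exact Finset.sum_congr rfl (fun c hc => Aterm c (by simp only [mem_range] at hc; omega))
    rw [hA]
    have Bterm : ∀ k, k ≤ n → k + 1 ≤ e₂ →
        (RatFunc.X : RatFunc ℚ)^((k+1)*k) * (RatFunc.X^(2*(k+1)) - 1) *
          ((Pq (k+1))⁻¹ * (Pq (n+1-(k+1)))⁻¹ * (Pq (e₂-(k+1)))⁻¹)
        = RatFunc.X^(2*e₂) * (RatFunc.X^(k*(k-1)) * ((Pq k)⁻¹ * (Pq (n-k))⁻¹ * (Pq (e₂-k))⁻¹))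
          - RatFunc.X^(k*(k+1)) * ((Pq k)⁻¹ * (Pq (n-k))⁻¹ * (Pq (e₂-k))⁻¹) := by
      intro k hk hke
      have h3 : ((RatFunc.X : RatFunc ℚ)^(2*(e₂-k)) - 1) * (Pq (e₂-k))⁻¹ = (Pq (e₂-(k+1)))⁻¹ := by
        have := inv_Pq_succ (e₂-(k+1))
        rwa [show e₂-(k+1)+1 = e₂-k from by omega] at this
      rw [show n+1-(k+1) = n-k from by omega, ← h3, ← inv_Pq_succ k]
      have e1 : (RatFunc.X : RatFunc ℚ)^(2*e₂) * RatFunc.X^(k*(k-1))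
          = RatFunc.X^((k+1)*k) * RatFunc.X^(2*(e₂-k)) := by
        rw [← pow_add, ← pow_add, natE2 k e₂ hke]
      have e2 : (RatFunc.X : RatFunc ℚ)^(k*(k+1)) = RatFunc.X^((k+1)*k) := by
        rw [Nat.mul_comm]
      rw [← mul_assoc ((RatFunc.X : RatFunc ℚ)^(2*e₂)), e1, e2]
      ring
    have hB : ∑ c ∈ range (min (n+1) e₂ + 1),
        (RatFunc.X : RatFunc ℚ)^(c*(c-1)) * (RatFunc.X^(2*c) - 1) *
          ((Pq c)⁻¹ * (Pq (n+1-c))⁻¹ * (Pq (e₂-c))⁻¹)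
        = RatFunc.X^(2*e₂) * (∑ c ∈ range (min n e₂ + 1),
              RatFunc.X^(c*(c-1)) * ((Pq c)⁻¹ * (Pq (n-c))⁻¹ * (Pq (e₂-c))⁻¹))
          - ∑ c ∈ range (min n e₂ + 1),
              RatFunc.X^(c*(c+1)) * ((Pq c)⁻¹ * (Pq (n-c))⁻¹ * (Pq (e₂-c))⁻¹) := by
      rw [Finset.sum_range_succ']
      norm_num
      have hcongr : ∑ k ∈ range (min (n+1) e₂), (RatFunc.X : RatFunc ℚ)^((k+1)*k) *
            (RatFunc.X^(2*(k+1)) - 1) *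
            ((Pq (k+1))⁻¹ * (Pq (n+1-(k+1)))⁻¹ * (Pq (e₂-(k+1)))⁻¹)
          = ∑ k ∈ range (min n e₂ + 1),
            (RatFunc.X^(2*e₂) * (RatFunc.X^(k*(k-1)) * ((Pq k)⁻¹ * (Pq (n-k))⁻¹ * (Pq (e₂-k))⁻¹))
              - RatFunc.X^(k*(k+1)) * ((Pq k)⁻¹ * (Pq (n-k))⁻¹ * (Pq (e₂-k))⁻¹)) := by
        rcases le_or_gt e₂ n with h | h
        · rw [min_eq_right (by omega), min_eq_right h, Finset.sum_range_succ]
          have hz : (RatFunc.X : RatFunc ℚ)^(2*e₂) *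
                (RatFunc.X^(e₂*(e₂-1)) * ((Pq e₂)⁻¹ * (Pq (n-e₂))⁻¹ * (Pq (e₂-e₂))⁻¹))
              - RatFunc.X^(e₂*(e₂+1)) * ((Pq e₂)⁻¹ * (Pq (n-e₂))⁻¹ * (Pq (e₂-e₂))⁻¹) = 0 := by
            rw [← mul_assoc, ← pow_add, natE3, sub_self]
          rw [hz, add_zero]
          exact Finset.sum_congr rfl
            (fun k hk => Bterm k (by simp only [mem_range] at hk; omega)
              (by simp only [mem_range] at hk; omega))
        · rw [min_eq_left (by omega), min_eq_left (by omega)]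
          exact Finset.sum_congr rfl
            (fun k hk => Bterm k (by simp only [mem_range] at hk; omega)
              (by simp only [mem_range] at hk; omega))
      rw [hcongr, Finset.sum_sub_distrib, ← Finset.mul_sum]
    rw [hB]
    ring

lemma natE4 (e₁ e₂ c : ℕ) (hc1 : c ≤ e₁) (hc2 : c ≤ e₂) :
    (e₁ + e₂) + c*(c-1) = c*c + ((e₁ - c) + (c + (e₂ - c))) := by
  obtain ⟨d1, rfl⟩ := Nat.exists_eq_add_of_le hc1
  obtain ⟨d2, rfl⟩ := Nat.exists_eq_add_of_le hc2
  rw [show c+d1-c = d1 from by omega, show c+d2-c = d2 from by omega]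
  cases c with
  | zero => omega
  | succ m => simp only [Nat.add_sub_cancel]; ring

/-- The coefficientwise form of the quantum dilogarithm (wall-crossing) identity
`A^{(0)}(t₂) ∗ A^{(0)}(t₁) = A^{(0)}(t₁) ∗ A^{(0)}(t₁t₂) ∗ A^{(0)}(t₂)` for the A₂
quiver `• → •`: for all `e₁, e₂ ∈ ℕ`,
`q^{e₁e₂} A(e₁) A(e₂) = Σ_{c=0}^{min(e₁,e₂)} q^{−(e₁−c)c − (e₁−c)(e₂−c) − c(e₂−c)}
  A(e₁−c) A(c) A(e₂−c)`. -/
theorem quantum_dilogarithm_identity (e₁ e₂ : ℕ) :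
    (RatFunc.X : RatFunc ℚ) ^ (e₁ * e₂) * Aq e₁ * Aq e₂ =
      ∑ c ∈ Finset.range (min e₁ e₂ + 1),
        (RatFunc.X : RatFunc ℚ) ^
            (-(((e₁ - c) * c + (e₁ - c) * (e₂ - c) + c * (e₂ - c) : ℕ) : ℤ)) *
          Aq (e₁ - c) * Aq c * Aq (e₂ - c) := by
  have hX : (RatFunc.X : RatFunc ℚ) ≠ 0 := RatFunc.X_ne_zero
  have hAq : ∀ d, Aq d = RatFunc.X ^ d * (Pq d)⁻¹ := fun d => rfl
  apply mul_left_cancel₀ (pow_ne_zero (e₁*e₂) hX)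
  have hL : (RatFunc.X : RatFunc ℚ)^(e₁*e₂) * (RatFunc.X^(e₁*e₂) * Aq e₁ * Aq e₂)
      = RatFunc.X^(e₁+e₂) * (RatFunc.X^(2*(e₁*e₂)) * ((Pq e₁)⁻¹ * (Pq e₂)⁻¹)) := by
    rw [hAq, hAq, show 2*(e₁*e₂) = e₁*e₂ + e₁*e₂ from by ring, pow_add, pow_add]
    ring
  rw [hL, ← core e₂ e₁, Finset.mul_sum, Finset.mul_sum]
  refine Finset.sum_congr rfl (fun c hc => ?_)
  simp only [mem_range] at hc
  have hc1 : c ≤ e₁ := le_trans (by omega : c ≤ min e₁ e₂) (min_le_left _ _)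
  have hc2 : c ≤ e₂ := le_trans (by omega : c ≤ min e₁ e₂) (min_le_right _ _)
  have hz : (RatFunc.X : RatFunc ℚ)^(e₁*e₂) *
      (RatFunc.X : RatFunc ℚ) ^
        (-(((e₁ - c) * c + (e₁ - c) * (e₂ - c) + c * (e₂ - c) : ℕ) : ℤ))
      = RatFunc.X^(c*c) := by
    rw [← zpow_natCast (RatFunc.X : RatFunc ℚ) (e₁*e₂), ← zpow_add₀ hX,
      ← zpow_natCast (RatFunc.X : RatFunc ℚ) (c*c)]
    congr 1
    push_cast [hc1, hc2]
    ring
  simp only [hAq]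
  calc (RatFunc.X : RatFunc ℚ)^(e₁+e₂) *
        (RatFunc.X^(c*(c-1)) * ((Pq c)⁻¹ * (Pq (e₁-c))⁻¹ * (Pq (e₂-c))⁻¹))
      = RatFunc.X^((e₁+e₂) + c*(c-1)) * ((Pq c)⁻¹ * (Pq (e₁-c))⁻¹ * (Pq (e₂-c))⁻¹) := by
        rw [pow_add]; ring
    _ = RatFunc.X^(c*c + ((e₁-c) + (c + (e₂-c)))) *
          ((Pq c)⁻¹ * (Pq (e₁-c))⁻¹ * (Pq (e₂-c))⁻¹) := by
        rw [natE4 e₁ e₂ c hc1 hc2]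
    _ = RatFunc.X^(c*c) * ((RatFunc.X^(e₁-c) * (Pq (e₁-c))⁻¹) * (RatFunc.X^c * (Pq c)⁻¹) *
          (RatFunc.X^(e₂-c) * (Pq (e₂-c))⁻¹)) := by
        rw [pow_add, pow_add, pow_add]; ring
    _ = RatFunc.X^(e₁*e₂) *
          ((RatFunc.X : RatFunc ℚ) ^
              (-(((e₁ - c) * c + (e₁ - c) * (e₂ - c) + c * (e₂ - c) : ℕ) : ℤ)) *
            (RatFunc.X^(e₁-c) * (Pq (e₁-c))⁻¹) * (RatFunc.X^c * (Pq c)⁻¹) *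
            (RatFunc.X^(e₂-c) * (Pq (e₂-c))⁻¹)) := by
        rw [← hz]; ring
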